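/- The subspace-metric intersection numbers satisfy N_S(a,b,w)·J_S(u,s,w;a,b,c) = N_S(a,c,u)·J_S(w,s,u;a,c,b). -/

import Mathlib

/-- The subspace distance `d_S(U,V) = dim(U+V) - dim(U∩V)`. -/
noncomputable def dS {F : Type} [Field F] {n : ℕ} (U V : Submodule F (Fin n → F)) : ℕ :=
  Module.finrank F ↥(U ⊔ V) - Module.finrank F ↥(U ⊓ V)

section Aux
open Submodule Module
variable {F : Type} [Field F]


theorem glue_exists {E E' : Type} [AddCommGroup E] [Module F E] [AddCommGroup E'] [Module F E']
    {p q : Submodule F E} {p' q' : Submodule F E'}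
    (h : IsCompl p q) (h' : IsCompl p' q') (e : p ≃ₗ[F] p') (f : q ≃ₗ[F] q') :
    ∃ g : E ≃ₗ[F] E', (∀ x : p, g x = e x) ∧ (∀ x : q, g x = f x) := by
  refine ⟨((Submodule.prodEquivOfIsCompl p q h).symm.trans (e.prodCongr f)).trans
      (Submodule.prodEquivOfIsCompl p' q' h'), fun x => ?_, fun x => ?_⟩
  · simp [Submodule.prodEquivOfIsCompl_symm_apply_left, LinearEquiv.prodCongr_apply,
      Submodule.coe_prodEquivOfIsCompl']
  · simp [Submodule.prodEquivOfIsCompl_symm_apply_right, LinearEquiv.prodCongr_apply,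
      Submodule.coe_prodEquivOfIsCompl']

theorem exists_compl_within {V : Type} [AddCommGroup V] [Module F V]
    {k B : Submodule F V} (hkB : k ≤ B) :
    ∃ C : Submodule F V, C ≤ B ∧ k ⊓ C = ⊥ ∧ k ⊔ C = B := by
  obtain ⟨c, hc⟩ := Submodule.exists_isCompl (comap B.subtype k)
  refine ⟨map B.subtype c, map_subtype_le _ _, ?_, ?_⟩
  · rw [Submodule.eq_bot_iff]
    rintro x ⟨hxk, hxc⟩
    obtain ⟨y, hy, rfl⟩ := hxc
    have : y ∈ comap B.subtype k ⊓ c := ⟨hxk, hy⟩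
    rw [hc.inf_eq_bot] at this
    simp_all
  · have h1 : map B.subtype (comap B.subtype k ⊔ c) = B := by
      rw [hc.sup_eq_top, Submodule.map_subtype_top]
    rw [Submodule.map_sup, Submodule.map_comap_subtype, inf_eq_right.mpr hkB] at h1
    exact h1

theorem isCompl_comap {V : Type} [AddCommGroup V] [Module F V] {p q : Submodule F V}
    (h : p ⊓ q = ⊥) :
    IsCompl (comap (p ⊔ q).subtype p) (comap (p ⊔ q).subtype q) := by
  constructor
  · rw [disjoint_iff, Submodule.eq_bot_iff]
    rintro ⟨x, hx⟩ ⟨h1, h2⟩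
    have : x ∈ p ⊓ q := ⟨h1, h2⟩
    rw [h] at this
    simpa using this
  · rw [codisjoint_iff, Submodule.eq_top_iff']
    rintro ⟨x, hx⟩
    obtain ⟨y, hy, z, hz, hyz⟩ := Submodule.mem_sup.mp hx
    exact Submodule.mem_sup.mpr ⟨⟨y, Submodule.mem_sup_left hy⟩, hy,
      ⟨z, Submodule.mem_sup_right hz⟩, hz, Subtype.ext hyz⟩

theorem exists_aut {V : Type} [AddCommGroup V] [Module F V] [FiniteDimensional F V]
    (A B B' : Submodule F V)
    (h1 : finrank F B = finrank F B')
    (h2 : finrank F ↥(A ⊓ B) = finrank F ↥(A ⊓ B')) :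
    ∃ g : V ≃ₗ[F] V, Submodule.map (g : V →ₗ[F] V) A = A ∧
      Submodule.map (g : V →ₗ[F] V) B = B' := by
  classical
  have hsupB := Submodule.finrank_sup_add_finrank_inf_eq A B
  have hsupB' := Submodule.finrank_sup_add_finrank_inf_eq A B'
  have h3 : finrank F ↥(A ⊔ B) = finrank F ↥(A ⊔ B') := by omega
  -- pieces inside A
  set kA := comap A.subtype (A ⊓ B) with hkA
  set kA' := comap A.subtype (A ⊓ B') with hkA'
  have hkAr : finrank F kA = finrank F ↥(A ⊓ B) :=
    (Submodule.comapSubtypeEquivOfLe inf_le_left).finrank_eq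
  have hkAr' : finrank F kA' = finrank F ↥(A ⊓ B') :=
    (Submodule.comapSubtypeEquivOfLe inf_le_left).finrank_eq
  obtain ⟨cA, hcA⟩ := Submodule.exists_isCompl kA
  obtain ⟨cA', hcA'⟩ := Submodule.exists_isCompl kA'
  have hcAr := Submodule.finrank_add_eq_of_isCompl hcA
  have hcAr' := Submodule.finrank_add_eq_of_isCompl hcA'
  have e1 : kA ≃ₗ[F] kA' :=
    (FiniteDimensional.nonempty_linearEquiv_of_finrank_eq (by omega)).some
  have e2 : cA ≃ₗ[F] cA' :=
    (FiniteDimensional.nonempty_linearEquiv_of_finrank_eq (by omega)).some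
  obtain ⟨eA, heA1, _⟩ := glue_exists hcA hcA' e1 e2
  -- complements of A ⊓ B inside B, and of A ⊔ B in V
  obtain ⟨CB, hCBle, hCBinf, hCBsup⟩ := exists_compl_within (inf_le_right : A ⊓ B ≤ B)
  obtain ⟨CB', hCBle', hCBinf', hCBsup'⟩ := exists_compl_within (inf_le_right : A ⊓ B' ≤ B')
  obtain ⟨W, hW⟩ := Submodule.exists_isCompl (A ⊔ B)
  obtain ⟨W', hW'⟩ := Submodule.exists_isCompl (A ⊔ B')
  have hWr := Submodule.finrank_add_eq_of_isCompl hW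
  have hWr' := Submodule.finrank_add_eq_of_isCompl hW'
  have hCBr : finrank F ↥(A ⊓ B) + finrank F CB = finrank F B := by
    have := Submodule.finrank_sup_add_finrank_inf_eq (A ⊓ B) CB
    rw [hCBinf, hCBsup, finrank_bot] at this; omega
  have hCBr' : finrank F ↥(A ⊓ B') + finrank F CB' = finrank F B' := by
    have := Submodule.finrank_sup_add_finrank_inf_eq (A ⊓ B') CB'
    rw [hCBinf', hCBsup', finrank_bot] at this; omega
  -- Q := CB ⊔ W is a complement of A
  have hCBW : CB ⊓ W = ⊥ := by
    rw [← le_bot_iff, ← hW.inf_eq_bot]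
    exact inf_le_inf_right _ (hCBle.trans le_sup_right)
  have hCBW' : CB' ⊓ W' = ⊥ := by
    rw [← le_bot_iff, ← hW'.inf_eq_bot]
    exact inf_le_inf_right _ (hCBle'.trans le_sup_right)
  have hACB : A ⊔ CB = A ⊔ B := by
    conv_rhs => rw [← hCBsup]
    rw [← sup_assoc, sup_inf_self]
  have hACB' : A ⊔ CB' = A ⊔ B' := by
    conv_rhs => rw [← hCBsup']
    rw [← sup_assoc, sup_inf_self]
  have hQr : finrank F ↥(CB ⊔ W) + 0 = finrank F CB + finrank F W := by
    have := Submodule.finrank_sup_add_finrank_inf_eq CB W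
    rw [hCBW, finrank_bot] at this; omega
  have hQr' : finrank F ↥(CB' ⊔ W') + 0 = finrank F CB' + finrank F W' := by
    have := Submodule.finrank_sup_add_finrank_inf_eq CB' W'
    rw [hCBW', finrank_bot] at this; omega
  have hAQtop : A ⊔ (CB ⊔ W) = ⊤ := by
    rw [← sup_assoc, hACB, hW.sup_eq_top]
  have hAQtop' : A ⊔ (CB' ⊔ W') = ⊤ := by
    rw [← sup_assoc, hACB', hW'.sup_eq_top]
  have hAQsum := Submodule.finrank_sup_add_finrank_inf_eq A (CB ⊔ W)
  rw [hAQtop, finrank_top] at hAQsum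
  have hAQsum' := Submodule.finrank_sup_add_finrank_inf_eq A (CB' ⊔ W')
  rw [hAQtop', finrank_top] at hAQsum'
  have hAQbot : A ⊓ (CB ⊔ W) = ⊥ := Submodule.finrank_eq_zero.mp (by omega)
  have hAQbot' : A ⊓ (CB' ⊔ W') = ⊥ := Submodule.finrank_eq_zero.mp (by omega)
  have hAQ : IsCompl A (CB ⊔ W) := ⟨disjoint_iff.mpr hAQbot, codisjoint_iff.mpr hAQtop⟩
  have hAQ' : IsCompl A (CB' ⊔ W') := ⟨disjoint_iff.mpr hAQbot', codisjoint_iff.mpr hAQtop'⟩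
  -- build f : Q ≃ Q' respecting CB ↦ CB'
  have hQcompl := isCompl_comap hCBW
  have hQcompl' := isCompl_comap hCBW'
  have eCB : ↥CB ≃ₗ[F] ↥CB' :=
    (FiniteDimensional.nonempty_linearEquiv_of_finrank_eq (by omega)).some
  have eW : ↥W ≃ₗ[F] ↥W' :=
    (FiniteDimensional.nonempty_linearEquiv_of_finrank_eq (by omega)).some
  have e3 : ↥(comap (CB ⊔ W).subtype CB) ≃ₗ[F] ↥(comap (CB' ⊔ W').subtype CB') :=
    ((Submodule.comapSubtypeEquivOfLe le_sup_left).trans eCB).trans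
      (Submodule.comapSubtypeEquivOfLe le_sup_left).symm
  have e4 : ↥(comap (CB ⊔ W).subtype W) ≃ₗ[F] ↥(comap (CB' ⊔ W').subtype W') :=
    ((Submodule.comapSubtypeEquivOfLe le_sup_right).trans eW).trans
      (Submodule.comapSubtypeEquivOfLe le_sup_right).symm
  obtain ⟨f, hf1, _⟩ := glue_exists hQcompl hQcompl' e3 e4
  obtain ⟨g, hg1, hg2⟩ := glue_exists hAQ hAQ' eA f
  refine ⟨g, ?_, ?_⟩
  · -- map g A = A
    apply Submodule.eq_of_le_of_finrank_eq
    · rintro _ ⟨x, hx, rfl⟩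
      simp only [LinearEquiv.coe_coe]
      rw [hg1 ⟨x, hx⟩]
      exact (eA ⟨x, hx⟩).2
    · rw [LinearEquiv.finrank_map_eq]
  · -- map g B = B'
    have hmapk : map (g : V →ₗ[F] V) (A ⊓ B) = A ⊓ B' := by
      apply Submodule.eq_of_le_of_finrank_eq
      · rintro _ ⟨x, hx, rfl⟩
        have hxA : x ∈ A := hx.1
        simp only [LinearEquiv.coe_coe]
        rw [hg1 ⟨x, hxA⟩]
        have hxkA : (⟨x, hxA⟩ : ↥A) ∈ kA := hx
        have := heA1 ⟨⟨x, hxA⟩, hxkA⟩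
        rw [this]
        exact (e1 ⟨⟨x, hxA⟩, hxkA⟩).2
      · rw [LinearEquiv.finrank_map_eq]; omega
    have hmapCB : map (g : V →ₗ[F] V) CB = CB' := by
      apply Submodule.eq_of_le_of_finrank_eq
      · rintro _ ⟨x, hx, rfl⟩
        have hxQ : x ∈ CB ⊔ W := Submodule.mem_sup_left hx
        simp only [LinearEquiv.coe_coe]
        rw [hg2 ⟨x, hxQ⟩]
        have hxp : (⟨x, hxQ⟩ : ↥(CB ⊔ W)) ∈ comap (CB ⊔ W).subtype CB := hx
        have := hf1 ⟨⟨x, hxQ⟩, hxp⟩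
        rw [this]
        exact (e3 ⟨⟨x, hxQ⟩, hxp⟩).2
      · rw [LinearEquiv.finrank_map_eq]; omega
    rw [← hCBsup, Submodule.map_sup, hmapk, hmapCB, hCBsup']

theorem dS_comm {n : ℕ} (U V : Submodule F (Fin n → F)) : dS U V = dS V U := by
  rw [dS, dS, sup_comm, inf_comm]

theorem map_symm_map {V : Type} [AddCommGroup V] [Module F V] (g : V ≃ₗ[F] V)
    (p : Submodule F V) :
    Submodule.map (g.symm : V →ₗ[F] V) (Submodule.map (g : V →ₗ[F] V) p) = p := by
  ext x
  simp [Submodule.mem_map]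

theorem dS_map {n : ℕ} (g : (Fin n → F) ≃ₗ[F] (Fin n → F)) (U V : Submodule F (Fin n → F)) :
    dS (Submodule.map (g : (Fin n → F) →ₗ[F] (Fin n → F)) U)
       (Submodule.map (g : (Fin n → F) →ₗ[F] (Fin n → F)) V) = dS U V := by
  rw [dS, dS, ← Submodule.map_sup, ← Submodule.map_inf (g : (Fin n → F) →ₗ[F] (Fin n → F)) g.injective,
    LinearEquiv.finrank_map_eq, LinearEquiv.finrank_map_eq]

theorem fiber_equiv {n : ℕ} (A B y : Submodule F (Fin n → F))
    (hfr : finrank F B = finrank F y) (hw : dS A B = dS A y) (c u s : ℕ) :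
    Nonempty ({X : Submodule F (Fin n → F) // finrank F X = c ∧ dS A X = u ∧ dS B X = s} ≃
      {X : Submodule F (Fin n → F) // finrank F X = c ∧ dS A X = u ∧ dS y X = s}) := by
  have m1 : finrank F ↥(A ⊓ B) ≤ finrank F ↥(A ⊔ B) :=
    Submodule.finrank_mono (le_trans inf_le_left le_sup_left)
  have m2 : finrank F ↥(A ⊓ y) ≤ finrank F ↥(A ⊔ y) :=
    Submodule.finrank_mono (le_trans inf_le_left le_sup_left)
  have e1 := Submodule.finrank_sup_add_finrank_inf_eq A B
  have e2 := Submodule.finrank_sup_add_finrank_inf_eq A y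
  rw [dS, dS] at hw
  have hinf : finrank F ↥(A ⊓ B) = finrank F ↥(A ⊓ y) := by omega
  obtain ⟨g, hgA, hgB⟩ := exists_aut A B y hfr hinf
  have hgA' : Submodule.map (g.symm : (Fin n → F) →ₗ[F] (Fin n → F)) A = A := by
    conv_lhs => rw [← hgA]
    exact map_symm_map g A
  have hgB' : Submodule.map (g.symm : (Fin n → F) →ₗ[F] (Fin n → F)) y = B := by
    rw [← hgB]; exact map_symm_map g B
  have fwd : ∀ X : Submodule F (Fin n → F), (finrank F X = c ∧ dS A X = u ∧ dS B X = s) →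
      (finrank F (Submodule.map (g : (Fin n → F) →ₗ[F] (Fin n → F)) X) = c ∧
        dS A (Submodule.map (g : (Fin n → F) →ₗ[F] (Fin n → F)) X) = u ∧
        dS y (Submodule.map (g : (Fin n → F) →ₗ[F] (Fin n → F)) X) = s) := by
    rintro X ⟨hc, hu, hs⟩
    refine ⟨by rw [LinearEquiv.finrank_map_eq]; exact hc, ?_, ?_⟩
    · conv_lhs => rw [← hgA]
      rw [dS_map]; exact hu
    · rw [← hgB, dS_map]; exact hs
  have bwd : ∀ X : Submodule F (Fin n → F), (finrank F X = c ∧ dS A X = u ∧ dS y X = s) →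
      (finrank F (Submodule.map (g.symm : (Fin n → F) →ₗ[F] (Fin n → F)) X) = c ∧
        dS A (Submodule.map (g.symm : (Fin n → F) →ₗ[F] (Fin n → F)) X) = u ∧
        dS B (Submodule.map (g.symm : (Fin n → F) →ₗ[F] (Fin n → F)) X) = s) := by
    rintro X ⟨hc, hu, hs⟩
    refine ⟨by rw [LinearEquiv.finrank_map_eq]; exact hc, ?_, ?_⟩
    · conv_lhs => rw [← hgA']
      rw [dS_map]; exact hu
    · rw [← hgB', dS_map]; exact hs
  refine ⟨⟨fun X => ⟨_, fwd X.1 X.2⟩, fun X => ⟨_, bwd X.1 X.2⟩, fun X => Subtype.ext ?_,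
    fun X => Subtype.ext ?_⟩⟩
  · exact map_symm_map g X.1
  · have := map_symm_map g.symm X.1
    rwa [LinearEquiv.symm_symm] at this


end Aux

set_option maxHeartbeats 1000000 in
theorem stmt13 (F : Type) [Field F] [Fintype F] (n a b c u s w : ℕ)
    (A B C : Submodule F (Fin n → F))
    (hA : Module.finrank F ↥A = a) (hB : Module.finrank F ↥B = b)
    (hC : Module.finrank F ↥C = c) (hAB : dS A B = w) (hAC : dS A C = u) :
    -- N_S(a,b,w) * J_S(u,s,w;a,b,c) = N_S(a,c,u) * J_S(w,s,u;a,c,b)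
    Nat.card {B' : Submodule F (Fin n → F) //
          Module.finrank F ↥B' = b ∧ dS A B' = w} *
        Nat.card {X : Submodule F (Fin n → F) //
          Module.finrank F ↥X = c ∧ dS A X = u ∧ dS B X = s} =
      Nat.card {C' : Submodule F (Fin n → F) //
          Module.finrank F ↥C' = c ∧ dS A C' = u} *
        Nat.card {Y : Submodule F (Fin n → F) //
          Module.finrank F ↥Y = b ∧ dS A Y = w ∧ dS C Y = s} := by
  classical
  set P := {p : Submodule F (Fin n → F) × Submodule F (Fin n → F) //
    (Module.finrank F ↥p.1 = b ∧ dS A p.1 = w) ∧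
      (Module.finrank F ↥p.2 = c ∧ dS A p.2 = u) ∧ dS p.1 p.2 = s} with hP
  have E1 : P ≃ Σ _y : {B' : Submodule F (Fin n → F) //
        Module.finrank F ↥B' = b ∧ dS A B' = w},
      {X : Submodule F (Fin n → F) //
        Module.finrank F ↥X = c ∧ dS A X = u ∧ dS _y.1 X = s} :=
    { toFun := fun p => ⟨⟨p.1.1, p.2.1⟩, ⟨p.1.2, p.2.2.1.1, p.2.2.1.2, p.2.2.2⟩⟩
      invFun := fun q => ⟨(q.1.1, q.2.1), q.1.2, ⟨q.2.2.1, q.2.2.2.1⟩, q.2.2.2.2⟩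
      left_inv := fun p => rfl
      right_inv := fun q => rfl }
  have E2 : P ≃ Σ _x : {C' : Submodule F (Fin n → F) //
        Module.finrank F ↥C' = c ∧ dS A C' = u},
      {Y : Submodule F (Fin n → F) //
        Module.finrank F ↥Y = b ∧ dS A Y = w ∧ dS _x.1 Y = s} :=
    { toFun := fun p => ⟨⟨p.1.2, p.2.2.1⟩, ⟨p.1.1, p.2.1.1, p.2.1.2,
        by rw [dS_comm]; exact p.2.2.2⟩⟩
      invFun := fun q => ⟨(q.2.1, q.1.1), ⟨q.2.2.1, q.2.2.2.1⟩, q.1.2,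
        by rw [dS_comm]; exact q.2.2.2.2⟩
      left_inv := fun p => rfl
      right_inv := fun q => rfl }
  have h1 : Nat.card P =
      Nat.card ({B' : Submodule F (Fin n → F) //
          Module.finrank F ↥B' = b ∧ dS A B' = w} ×
        {X : Submodule F (Fin n → F) //
          Module.finrank F ↥X = c ∧ dS A X = u ∧ dS B X = s}) :=
by
    refine Nat.card_congr (E1.trans ?_)
    refine (Equiv.sigmaCongrRight fun y => ?_).trans (Equiv.sigmaEquivProd _ _)
    exact (fiber_equiv A B y.1 (hB.trans y.2.1.symm) (hAB.trans y.2.2.symm) c u s).some.symm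
  have h2 : Nat.card P =
      Nat.card ({C' : Submodule F (Fin n → F) //
          Module.finrank F ↥C' = c ∧ dS A C' = u} ×
        {Y : Submodule F (Fin n → F) //
          Module.finrank F ↥Y = b ∧ dS A Y = w ∧ dS C Y = s}) :=
by
    refine Nat.card_congr (E2.trans ?_)
    refine (Equiv.sigmaCongrRight fun x => ?_).trans (Equiv.sigmaEquivProd _ _)
    exact (fiber_equiv A C x.1 (hC.trans x.2.1.symm) (hAC.trans x.2.2.symm) b w s).some.symm
  rw [Nat.card_prod] at h1 h2
  exact h1.symm.trans h2
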